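/- Let ℓ be the negative d-th-axis ray in ℝ^d with unit direction u = (0,…,0,−1), let 0 < α with α(1 + πK/2) < π/4, and consider the central projection π from the origin onto the hyperplane {x : x_d = −1}. If D₁ = B(x, r) and D₂ = B(x, K·r) are concentric balls with r ≤ dist(x, ℓ) and x in the cone C(u, α), then diam(π(D₂)) ≤ √2 · K · diam(π(D₁)). -/

import Mathlib

open scoped RealInnerProductSpace
open Real

lemma tan_le_four_div_pi_mul {s : ℝ} (h0 : 0 ≤ s) (h1 : s ≤ π / 4) :
    Real.tan s ≤ 4 / π * s := by
  have hπ := Real.pi_pos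
  have hsub : Set.Icc (0:ℝ) (π/4) ⊆ {x | Real.cos x ≠ 0} := by
    intro y hy
    have : 0 < Real.cos y :=
      Real.cos_pos_of_mem_Ioo ⟨by linarith [hy.1], by linarith [hy.2]⟩
    exact this.ne'
  have hconv : ConvexOn ℝ (Set.Icc 0 (π/4)) Real.tan := by
    apply MonotoneOn.convexOn_of_deriv (convex_Icc _ _)
    · exact Real.continuousOn_tan.mono hsub
    · rw [interior_Icc]
      intro y hy
      have hc : Real.cos y ≠ 0 := hsub ⟨hy.1.le, hy.2.le⟩
      exact (Real.differentiableAt_tan.2 hc).differentiableWithinAt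
    · rw [interior_Icc]
      intro y hy z hz hyz
      rw [Real.deriv_tan, Real.deriv_tan]
      have hcy : 0 < Real.cos y :=
        Real.cos_pos_of_mem_Ioo ⟨by linarith [hy.1], by linarith [hy.2]⟩
      have hcz : 0 < Real.cos z :=
        Real.cos_pos_of_mem_Ioo ⟨by linarith [hz.1], by linarith [hz.2]⟩
      have hle : Real.cos z ≤ Real.cos y :=
        Real.cos_le_cos_of_nonneg_of_le_pi hy.1.le (by linarith [hz.2]) hyz
      rw [div_le_div_iff₀ (by positivity) (by positivity)]
      nlinarith
  have h4 : (0:ℝ) < π/4 := by linarith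
  set t : ℝ := s / (π/4) with ht
  have ht0 : 0 ≤ t := by positivity
  have ht1 : t ≤ 1 := by rw [ht, div_le_one h4]; exact h1
  have hc := hconv.2 (Set.left_mem_Icc.2 h4.le) (Set.right_mem_Icc.2 h4.le)
      (show (0:ℝ) ≤ 1 - t by linarith) ht0 (by ring)
  have hs : (1 - t) • (0:ℝ) + t • (π/4) = s := by
    rw [smul_eq_mul, smul_eq_mul, ht]; field_simp; ring
  rw [hs] at hc
  rw [Real.tan_zero, Real.tan_pi_div_four] at hc
  calc Real.tan s ≤ (1-t) • (0:ℝ) + t • 1 := hc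
    _ = t := by simp
    _ = 4/π * s := by rw [ht]; field_simp

/-- Central projection from the origin onto the hyperplane `{x : x_d = −1}` in `ℝ^(d+1)`. -/
noncomputable def centralProj (d : ℕ) :
    EuclideanSpace ℝ (Fin (d + 1)) → EuclideanSpace ℝ (Fin (d + 1)) :=
  fun y => (-(y (Fin.last d)))⁻¹ • y

lemma scalar_key (a h R vd w : ℝ) (ha : 0 < a) (hh : 0 ≤ h) (hw : 0 ≤ w) (hR : 0 < R)
    (hcond : h + Real.sqrt 2 * R ≤ a) (hsum : vd^2 + w^2 ≤ R^2) (hb : 0 < a - vd) :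
    |vd| / (a*(a-vd)) * h + (a-vd)⁻¹ * w ≤ Real.sqrt 2 * R / a := by
  have hs2 : (0:ℝ) ≤ Real.sqrt 2 := Real.sqrt_nonneg 2
  have hs2sq : Real.sqrt 2 ^ 2 = 2 := Real.sq_sqrt (by norm_num)
  have hCS : (|vd| * (h + Real.sqrt 2 * R) + a * w)^2
      ≤ ((h + Real.sqrt 2 * R)^2 + a^2) * (vd^2 + w^2) := by
    nlinarith [sq_nonneg (|vd| * a - w * (h + Real.sqrt 2 * R)), sq_abs vd]
  have hsq2a : (h + Real.sqrt 2 * R)^2 + a^2 ≤ 2 * a^2 := by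
    nlinarith [mul_nonneg hs2 hR.le]
  have hmain0 : (|vd| * (h + Real.sqrt 2 * R) + a * w)^2 ≤ (Real.sqrt 2 * a * R)^2 := by
    calc (|vd| * (h + Real.sqrt 2 * R) + a * w)^2
        ≤ ((h + Real.sqrt 2 * R)^2 + a^2) * (vd^2 + w^2) := hCS
      _ ≤ (2*a^2) * R^2 := by
          apply mul_le_mul hsq2a hsum (by positivity) (by positivity)
      _ = (Real.sqrt 2 * a * R)^2 := by rw [mul_pow, mul_pow, hs2sq]
  have hmain1 : |vd| * (h + Real.sqrt 2 * R) + a * w ≤ Real.sqrt 2 * a * R := by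
    apply le_of_pow_le_pow_left₀ two_ne_zero (by positivity)
    exact hmain0
  have hmain : |vd| * h + a * w ≤ Real.sqrt 2 * R * (a - vd) := by
    have hvd_le : Real.sqrt 2 * R * vd ≤ Real.sqrt 2 * R * |vd| :=
      mul_le_mul_of_nonneg_left (le_abs_self vd) (by positivity)
    nlinarith [hmain1]
  have hfin : |vd| / (a*(a-vd)) * h + (a-vd)⁻¹ * w = (|vd| * h + a * w) / (a*(a-vd)) := by
    field_simp
  rw [hfin, div_le_div_iff₀ (by positivity) ha]
  calc (|vd| * h + a * w) * a ≤ (Real.sqrt 2 * R * (a - vd)) * a :=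
        mul_le_mul_of_nonneg_right hmain ha.le
    _ = Real.sqrt 2 * R * (a * (a - vd)) := by ring

set_option maxHeartbeats 1000000 in
lemma central_pointbound (d : ℕ) (x : EuclideanSpace ℝ (Fin (d+1))) (a R : ℝ)
    (ha_def : a = -(x (Fin.last d))) (ha : 0 < a) (hR : 0 < R)
    (hcond : ‖x + a • EuclideanSpace.single (Fin.last d) (1:ℝ)‖ + Real.sqrt 2 * R ≤ a)
    (y : EuclideanSpace ℝ (Fin (d+1))) (hy : y ∈ Metric.closedBall x R) :
    dist (centralProj d y) (centralProj d x) ≤ Real.sqrt 2 * R / a := by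
  set i : Fin (d+1) := Fin.last d with hi
  set ed : EuclideanSpace ℝ (Fin (d+1)) := EuclideanSpace.single i (1:ℝ) with hed
  set xh : EuclideanSpace ℝ (Fin (d+1)) := x + a • ed with hxh
  set h' : ℝ := ‖xh‖ with hh'
  have hs2 : (0:ℝ) ≤ Real.sqrt 2 := Real.sqrt_nonneg 2
  have hed_norm : ‖ed‖ = 1 := by simp [hed]
  have hxh_i : xh i = 0 := by
    simp [hxh, PiLp.add_apply, PiLp.smul_apply, hed, EuclideanSpace.single_apply, ha_def]
  have h'0 : 0 ≤ h' := norm_nonneg _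
  have hcoord : ∀ v : EuclideanSpace ℝ (Fin (d+1)), |v i| ≤ ‖v‖ := by
    intro v
    have h1 := abs_real_inner_le_norm (EuclideanSpace.single i (1:ℝ)) v
    simpa [EuclideanSpace.inner_single_left] using h1
  set vd : ℝ := y i - x i with hvd
  set w : EuclideanSpace ℝ (Fin (d+1)) := (y - x) - vd • ed with hw
  have hnv : ‖y - x‖ ≤ R := by
    rw [Metric.mem_closedBall] at hy
    rw [← dist_eq_norm]; exact hy
  have hwi : w i = 0 := by
    simp [hw, hvd, PiLp.sub_apply, PiLp.smul_apply, hed, EuclideanSpace.single_apply]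
  have hPyth : ‖y - x‖^2 = ‖w‖^2 + vd^2 := by
    have hyx : y - x = w + vd • ed := by rw [hw]; module
    have horth : ⟪w, vd • ed⟫ = 0 := by
      rw [real_inner_smul_right]
      have : ⟪w, ed⟫ = 0 := by
        rw [hed, EuclideanSpace.inner_single_right]
        simp [hwi]
      rw [this]; ring
    rw [hyx, norm_add_sq_real, horth, norm_smul, hed_norm, Real.norm_eq_abs,
      mul_one, sq_abs, mul_zero, add_zero]
  have hvdR : |vd| ≤ R := by
    have h1 := hcoord (y - x)
    have h2 : (y - x) i = vd := rfl
    rw [h2] at h1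
    linarith
  have hsq' : ‖y - x‖^2 ≤ R^2 := pow_le_pow_left₀ (norm_nonneg _) hnv 2
  have hs2gt1 : (1:ℝ) < Real.sqrt 2 := by
    rw [show (1:ℝ) = Real.sqrt 1 by simp]
    exact Real.sqrt_lt_sqrt (by norm_num) (by norm_num)
  have hb : 0 < a - vd := by
    have h1 := (abs_le.1 hvdR).2
    nlinarith
  have hyi : -(y i) = a - vd := by rw [hvd, ha_def]; ring
  -- the projection identity
  have hid : centralProj d y - centralProj d x
      = (vd / (a*(a - vd))) • xh + (a - vd)⁻¹ • w := by
    show (-(y i))⁻¹ • y - (-(x i))⁻¹ • x = _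
    rw [hyi, show -(x i) = a by rw [ha_def], hxh, hw]
    match_scalars
    · field_simp
    · field_simp
      ring
    · field_simp
      ring
  have hdist : dist (centralProj d y) (centralProj d x)
      = ‖(vd / (a*(a - vd))) • xh + (a - vd)⁻¹ • w‖ := by
    rw [dist_eq_norm, hid]
  rw [hdist]
  have hnb : ‖(vd / (a*(a - vd))) • xh + (a - vd)⁻¹ • w‖
      ≤ |vd| / (a*(a - vd)) * h' + (a - vd)⁻¹ * ‖w‖ := by
    calc ‖(vd / (a*(a - vd))) • xh + (a - vd)⁻¹ • w‖
        ≤ ‖(vd / (a*(a - vd))) • xh‖ + ‖(a - vd)⁻¹ • w‖ := norm_add_le _ _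
      _ = |vd / (a*(a - vd))| * h' + |(a - vd)⁻¹| * ‖w‖ := by
          rw [norm_smul, norm_smul]; rfl
      _ = |vd| / (a*(a - vd)) * h' + (a - vd)⁻¹ * ‖w‖ := by
          rw [abs_div, abs_of_pos (by positivity : (0:ℝ) < a*(a - vd)),
            abs_of_pos (by positivity : (0:ℝ) < (a - vd)⁻¹)]
  have hsum : vd^2 + ‖w‖^2 ≤ R^2 := by linarith [hPyth, hsq']
  have := scalar_key a h' R vd ‖w‖ ha h'0 (norm_nonneg _) hR hcond hsum hb
  linarith [hnb]

set_option maxHeartbeats 2000000 in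
/-- Under central projection from the origin onto the hyperplane `{x_d = −1}`, the projection of
the concentric ball `B(x, K·r)` has diameter at most `√2·K` times that of the projection of
`B(x, r)`, provided `B(x, r)` misses the negative `d`-axis ray `ℓ` and `x` lies in the cone of
aperture `α` about `ℓ`, with `α(1 + πK/2) < π/4`. -/
theorem central_projection_diam_ratio (d : ℕ) (K α r : ℝ)
    (hK : 0 < K) (hα : 0 < α) (hr : 0 < r)
    (hsmall : α * (1 + π * K / 2) < π / 4)
    (u : EuclideanSpace ℝ (Fin (d + 1)))
    (hu : u = -(EuclideanSpace.single (Fin.last d) (1 : ℝ)))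
    (x : EuclideanSpace ℝ (Fin (d + 1))) (hx0 : x ≠ 0)
    (hxcone : ‖x‖ * Real.cos α ≤ ⟪u, x⟫)
    (hmiss : r ≤ Metric.infDist x {y | ∃ t : ℝ, 0 ≤ t ∧ y = t • u}) :
    Metric.diam (centralProj d '' Metric.closedBall x (K * r)) ≤
      Real.sqrt 2 * K * Metric.diam (centralProj d '' Metric.closedBall x r) := by
  have hπ := Real.pi_pos
  set i : Fin (d+1) := Fin.last d with hi
  set ed : EuclideanSpace ℝ (Fin (d+1)) := EuclideanSpace.single i (1:ℝ) with hed
  set a : ℝ := -(x i) with ha_def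
  -- basic facts
  have hα4 : α < π / 4 := by nlinarith [mul_pos (mul_pos hα hπ) hK]
  have hcos : 0 < Real.cos α := Real.cos_pos_of_mem_Ioo ⟨by linarith, by linarith⟩
  have hxn : 0 < ‖x‖ := norm_pos_iff.2 hx0
  have hinner : ⟪u, x⟫ = a := by
    rw [hu, inner_neg_left, EuclideanSpace.inner_single_left]
    simp [ha_def]
  have hxca : ‖x‖ * Real.cos α ≤ a := hinner ▸ hxcone
  have ha : 0 < a := lt_of_lt_of_le (by positivity) hxca
  -- horizontal part of x
  set xh : EuclideanSpace ℝ (Fin (d+1)) := x + a • ed with hxh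
  set h' : ℝ := ‖xh‖ with hh'
  have hed_norm : ‖ed‖ = 1 := by simp [hed]
  have hxh_i : xh i = 0 := by
    simp [hxh, PiLp.add_apply, PiLp.smul_apply, hed, EuclideanSpace.single_apply, ha_def]
  have h'0 : 0 ≤ h' := norm_nonneg _
  -- |v i| ≤ ‖v‖ for any vector
  have hcoord : ∀ v : EuclideanSpace ℝ (Fin (d+1)), |v i| ≤ ‖v‖ := by
    intro v
    have h1 := abs_real_inner_le_norm (EuclideanSpace.single i (1:ℝ)) v
    simpa [EuclideanSpace.inner_single_left] using h1
  -- Pythagoras for x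
  have hx_sq : ‖x‖^2 = h'^2 + a^2 := by
    have hxeq : x = xh + (-a) • ed := by
      rw [hxh]; module
    have horth : ⟪xh, (-a) • ed⟫ = 0 := by
      rw [real_inner_smul_right]
      have : ⟪xh, ed⟫ = 0 := by
        rw [hed, EuclideanSpace.inner_single_right]
        simp [hxh_i]
      rw [this]; ring
    rw [hxeq, norm_add_sq_real, horth]
    rw [norm_smul, hed_norm]
    have : ‖(-a : ℝ)‖ = a := by rw [Real.norm_eq_abs, abs_neg, abs_of_pos ha]
    rw [this]
    ring
  -- r ≤ h'
  have hrh : r ≤ h' := by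
    have hmem : a • u ∈ {y : EuclideanSpace ℝ (Fin (d+1)) | ∃ t : ℝ, 0 ≤ t ∧ y = t • u} :=
      ⟨a, ha.le, rfl⟩
    have hle := Metric.infDist_le_dist_of_mem (x := x) hmem
    have hdx : dist x (a • u) = h' := by
      rw [dist_eq_norm, hu]
      have : x - a • -ed = xh := by rw [hxh]; module
      rw [this]
    linarith [hmiss, hle.trans_eq hdx]
  have hh'pos : 0 < h' := lt_of_lt_of_le hr hrh
  -- h' ≤ a tan α
  have htana : 0 ≤ Real.tan α :=
    Real.tan_nonneg_of_nonneg_of_le_pi_div_two hα.le (by linarith)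
  have h'tan : h' ≤ a * Real.tan α := by
    have hsc := Real.sin_sq_add_cos_sq α
    have htan := Real.tan_eq_sin_div_cos α
    have hxc2 : ‖x‖^2 * Real.cos α^2 ≤ a^2 := by
      nlinarith [mul_self_le_mul_self (by positivity : (0:ℝ) ≤ ‖x‖ * Real.cos α) hxca]
    have hsq : h'^2 * Real.cos α^2 ≤ a^2 * Real.sin α^2 := by nlinarith
    have h2 : h'^2 ≤ (a * Real.tan α)^2 := by
      have heq : (a * Real.tan α)^2 = a^2 * Real.sin α^2 / Real.cos α^2 := by
        rw [htan]; field_simp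
      rw [heq, le_div_iff₀ (by positivity)]
      linear_combination hsq
    exact le_of_pow_le_pow_left₀ two_ne_zero (mul_nonneg ha.le htana) h2
  have htanlt1 : Real.tan α < 1 := by
    rw [← Real.tan_pi_div_four]
    exact Real.tan_lt_tan_of_nonneg_of_lt_pi_div_two hα.le (by linarith) hα4
  -- sqrt 2 facts
  have hs2 : (0:ℝ) ≤ Real.sqrt 2 := Real.sqrt_nonneg 2
  have hs2sq : Real.sqrt 2 ^ 2 = 2 := Real.sq_sqrt (by norm_num)
  have hs2ge1 : (1:ℝ) ≤ Real.sqrt 2 := by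
    have h1 : Real.sqrt 1 ≤ Real.sqrt 2 := Real.sqrt_le_sqrt (by norm_num)
    simpa using h1
  have hs2le : Real.sqrt 2 ≤ π / 2 := by
    nlinarith [Real.pi_gt_three]
  -- the key smallness condition
  have htan1 : Real.tan α * (1 + Real.sqrt 2 * K) ≤ 1 := by
    have hlin := tan_le_four_div_pi_mul hα.le hα4.le
    have hfar : α * (1 + Real.sqrt 2 * K) ≤ α * (1 + π * K / 2) := by
      nlinarith [mul_le_mul_of_nonneg_left hs2le (mul_pos hα hK).le]
    have hK1 : (0:ℝ) ≤ 1 + Real.sqrt 2 * K := by positivity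
    calc Real.tan α * (1 + Real.sqrt 2 * K) ≤ (4/π * α) * (1 + Real.sqrt 2 * K) :=
          mul_le_mul_of_nonneg_right hlin hK1
      _ = 4/π * (α * (1 + Real.sqrt 2 * K)) := by ring
      _ ≤ 4/π * (π/4) := by
          apply mul_le_mul_of_nonneg_left _ (by positivity)
          linarith
      _ = 1 := by field_simp
  set R : ℝ := K * r with hR_def
  have hR : 0 < R := mul_pos hK hr
  have hcond : h' + Real.sqrt 2 * R ≤ a := by
    have e1 : h' * (1 + Real.sqrt 2 * K) ≤ (a * Real.tan α) * (1 + Real.sqrt 2 * K) :=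
      mul_le_mul_of_nonneg_right h'tan (by positivity)
    have e2 : a * (Real.tan α * (1 + Real.sqrt 2 * K)) ≤ a * 1 :=
      mul_le_mul_of_nonneg_left htan1 ha.le
    have e3 : Real.sqrt 2 * (K * r) ≤ Real.sqrt 2 * (K * h') :=
      mul_le_mul_of_nonneg_left (mul_le_mul_of_nonneg_left hrh hK.le) hs2
    nlinarith
  have hRa : R < a := by nlinarith
  have haR : 0 < a - r := by nlinarith [mul_le_mul_of_nonneg_left htanlt1.le ha.le]
  -- key upper estimate
  have key : ∀ y ∈ Metric.closedBall x R,
      dist (centralProj d y) (centralProj d x) ≤ Real.sqrt 2 * R / a :=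
    fun y hy => central_pointbound d x a R ha_def ha hR hcond y hy
  -- upper bound for big ball image
  have hx_mem : x ∈ Metric.closedBall x R := Metric.mem_closedBall_self hR.le
  have hdiam_big : Metric.diam (centralProj d '' Metric.closedBall x R)
      ≤ 2 * (Real.sqrt 2 * R / a) := by
    apply Metric.diam_le_of_forall_dist_le (by positivity)
    rintro p ⟨y, hy, rfl⟩ q ⟨z, hz, rfl⟩
    calc dist (centralProj d y) (centralProj d z)
        ≤ dist (centralProj d y) (centralProj d x) + dist (centralProj d x) (centralProj d z) :=
          dist_triangle _ _ _
      _ ≤ Real.sqrt 2 * R / a + Real.sqrt 2 * R / a := by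
          have h1 := key y hy
          have h2 := key z hz
          rw [dist_comm (centralProj d x)]
          linarith
      _ = 2 * (Real.sqrt 2 * R / a) := by ring
  -- lower bound for small ball image
  set e : EuclideanSpace ℝ (Fin (d+1)) := h'⁻¹ • xh with he
  have he_norm : ‖e‖ = 1 := by
    rw [he, norm_smul, Real.norm_eq_abs, abs_of_pos (inv_pos.2 hh'pos)]
    field_simp
    exact hh'.symm
  have hei : e i = 0 := by simp [he, PiLp.smul_apply, hxh_i]
  set y₁ : EuclideanSpace ℝ (Fin (d+1)) := x + r • e with hy₁
  set y₂ : EuclideanSpace ℝ (Fin (d+1)) := x - r • e with hy₂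
  have hy₁mem : y₁ ∈ Metric.closedBall x r := by
    rw [Metric.mem_closedBall, dist_eq_norm, hy₁]
    simp [norm_smul, he_norm, abs_of_pos hr]
  have hy₂mem : y₂ ∈ Metric.closedBall x r := by
    rw [Metric.mem_closedBall, dist_eq_norm, hy₂]
    simp [norm_smul, he_norm, abs_of_pos hr]
  have hy₁i : -(y₁ i) = a := by
    rw [hy₁]
    simp [PiLp.add_apply, PiLp.smul_apply, hei, ha_def]
  have hy₂i : -(y₂ i) = a := by
    rw [hy₂]
    simp [PiLp.sub_apply, PiLp.smul_apply, hei, ha_def]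
  have hdist12 : dist (centralProj d y₁) (centralProj d y₂) = 2 * r / a := by
    rw [dist_eq_norm]
    show ‖(-(y₁ i))⁻¹ • y₁ - (-(y₂ i))⁻¹ • y₂‖ = 2 * r / a
    rw [hy₁i, hy₂i]
    have : a⁻¹ • y₁ - a⁻¹ • y₂ = (2 * r * a⁻¹) • e := by
      rw [hy₁, hy₂]; module
    rw [this, norm_smul, he_norm, Real.norm_eq_abs, abs_of_pos (by positivity)]
    field_simp
  -- boundedness of small image
  have hcont : ContinuousOn (centralProj d) (Metric.closedBall x r) := by
    show ContinuousOn (fun y : EuclideanSpace ℝ (Fin (d+1)) => (-(y (Fin.last d)))⁻¹ • y) _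
    apply ContinuousOn.fun_smul
    · apply ContinuousOn.inv₀
      · exact ((EuclideanSpace.proj i).continuous.neg).continuousOn
      · intro y hy
        rw [Metric.mem_closedBall] at hy
        have h1 : |y i - x i| ≤ ‖y - x‖ := by
          simpa [PiLp.sub_apply] using hcoord (y - x)
        have h2 : ‖y - x‖ ≤ r := by rw [← dist_eq_norm]; exact hy
        have := abs_le.1 (h1.trans h2)
        have : 0 < -(y i) := by
          have hxi : x i = -a := by rw [ha_def]; ring
          linarith [this.2]
        exact this.ne'
    · exact continuousOn_id
  have hbounded : Bornology.IsBounded (centralProj d '' Metric.closedBall x r) :=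
    ((isCompact_closedBall x r).image_of_continuousOn hcont).isBounded
  have hlow : 2 * r / a ≤ Metric.diam (centralProj d '' Metric.closedBall x r) := by
    rw [← hdist12]
    exact Metric.dist_le_diam_of_mem hbounded ⟨y₁, hy₁mem, rfl⟩ ⟨y₂, hy₂mem, rfl⟩
  -- conclude
  calc Metric.diam (centralProj d '' Metric.closedBall x (K * r))
      ≤ 2 * (Real.sqrt 2 * R / a) := hdiam_big
    _ = Real.sqrt 2 * K * (2 * r / a) := by rw [hR_def]; ring
    _ ≤ Real.sqrt 2 * K * Metric.diam (centralProj d '' Metric.closedBall x r) := by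
        apply mul_le_mul_of_nonneg_left hlow (by positivity)
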